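/- For a minimally generated numerical semigroup S = ⟨n₁, …, n_k⟩ with n₁ < ⋯ < n_k and k ≥ 2, the set R(S) = {ρ(n) : 0 ≠ n ∈ S} has exactly one limit point in ℝ, namely n_k/n₁. -/

import Mathlib

/-- The set of factorization lengths of `n` over the generators `gens`. -/
def lenSet (k : ℕ) (gens : Fin k → ℕ) (n : ℕ) : Set ℕ :=
  {l | ∃ x : Fin k → ℕ, n = ∑ i, x i * gens i ∧ l = ∑ i, x i}

/-- The elasticity ρ(n) = L(n)/ℓ(n) of `n`, as a real number. -/
noncomputable def rhoR (k : ℕ) (gens : Fin k → ℕ) (n : ℕ) : ℝ :=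
  ((sSup (lenSet k gens n) : ℕ) : ℝ) / ((sInf (lenSet k gens n) : ℕ) : ℝ)

lemma mem_closure_iff_rep {k : ℕ} {gens : Fin k → ℕ} {n : ℕ} :
    n ∈ AddSubmonoid.closure (Set.range gens) ↔ ∃ x : Fin k → ℕ, n = ∑ i, x i * gens i := by
  constructor
  · intro h
    induction h using AddSubmonoid.closure_induction with
    | mem a ha =>
      obtain ⟨i, rfl⟩ := ha
      exact ⟨Pi.single i 1, by simp [Pi.single_apply, Finset.sum_ite_eq]⟩
    | zero => exact ⟨0, by simp⟩
    | add a b ha hb iha ihb =>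
      obtain ⟨u, rfl⟩ := iha; obtain ⟨v, rfl⟩ := ihb
      exact ⟨u + v, by simp [add_mul, Finset.sum_add_distrib]⟩
  · rintro ⟨x, rfl⟩
    refine AddSubmonoid.sum_mem _ fun i _ => ?_
    have := (AddSubmonoid.closure (Set.range gens)).nsmul_mem (AddSubmonoid.subset_closure (Set.mem_range_self i)) (x i)
    simpa [smul_eq_mul] using this

lemma key_trade {k : ℕ} {gens : Fin k → ℕ} (j : Fin k) (hj : 0 < gens j) (x : Fin k → ℕ) :
    ∃ y : Fin k → ℕ, (∑ i, y i * gens i = ∑ i, x i * gens i) ∧ ∀ i, i ≠ j → y i < gens j := by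
  refine ⟨fun i => if i = j then
      x j + ∑ i' ∈ Finset.univ.erase j, (x i' / gens j) * gens i' else x i % gens j, ?_, ?_⟩
  · rw [← Finset.add_sum_erase _ _ (Finset.mem_univ j),
      ← Finset.add_sum_erase _ (fun i => x i * gens i) (Finset.mem_univ j)]
    simp only [eq_self_iff_true, if_true]
    have h1 : ∀ i ∈ Finset.univ.erase j,
        (if i = j then x j + ∑ i' ∈ Finset.univ.erase j, (x i' / gens j) * gens i'
          else x i % gens j) * gens i = x i % gens j * gens i := by
      intro i hi
      rw [if_neg (Finset.ne_of_mem_erase hi)]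
    rw [Finset.sum_congr rfl h1, add_mul, Finset.sum_mul, add_assoc, ← Finset.sum_add_distrib]
    have h2 : ∀ i ∈ Finset.univ.erase j,
        x i / gens j * gens i * gens j + x i % gens j * gens i = x i * gens i := by
      intro i _
      have := Nat.div_add_mod (x i) (gens j)
      calc x i / gens j * gens i * gens j + x i % gens j * gens i
          = (gens j * (x i / gens j) + x i % gens j) * gens i := by ring
        _ = x i * gens i := by rw [this]
    rw [Finset.sum_congr rfl h2]
  · intro i hij
    simp only [if_neg hij]
    exact Nat.mod_lt _ hj

lemma lenSet_le {k : ℕ} {gens : Fin k → ℕ} {n l : ℕ} (hg : ∀ i, 0 < gens i)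
    (hl : l ∈ lenSet k gens n) : l ≤ n := by
  obtain ⟨x, rfl, rfl⟩ := hl
  exact Finset.sum_le_sum fun i _ => Nat.le_mul_of_pos_right _ (hg i)

lemma le_mul_of_mem {k : ℕ} {gens : Fin k → ℕ} {n l M : ℕ} (hM : ∀ i, gens i ≤ M)
    (hl : l ∈ lenSet k gens n) : n ≤ l * M := by
  obtain ⟨x, rfl, rfl⟩ := hl
  rw [Finset.sum_mul]
  exact Finset.sum_le_sum fun i _ => Nat.mul_le_mul_left _ (hM i)

lemma mul_le_of_mem {k : ℕ} {gens : Fin k → ℕ} {n l m : ℕ} (hm : ∀ i, m ≤ gens i)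
    (hl : l ∈ lenSet k gens n) : l * m ≤ n := by
  obtain ⟨x, rfl, rfl⟩ := hl
  rw [Finset.sum_mul]
  exact Finset.sum_le_sum fun i _ => Nat.mul_le_mul_left _ (hm i)

lemma key_bounds {k : ℕ} {gens : Fin k → ℕ} (j : Fin k) (hj : 0 < gens j) {M : ℕ}
    (hM : ∀ i, gens i ≤ M) {n : ℕ} (x : Fin k → ℕ) (hx : n = ∑ i, x i * gens i) :
    ∃ l ∈ lenSet k gens n,
      n ≤ l * gens j + k * (gens j * M) ∧ l * gens j ≤ n + k * (gens j * gens j) := by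
  obtain ⟨y, hval, hsmall⟩ := key_trade j hj x
  refine ⟨∑ i, y i, ⟨y, by rw [hx, hval], rfl⟩, ?_, ?_⟩
  · have split : n = y j * gens j + ∑ i ∈ Finset.univ.erase j, y i * gens i := by
      rw [hx, ← hval, ← Finset.add_sum_erase _ _ (Finset.mem_univ j)]
    have h1 : ∑ i ∈ Finset.univ.erase j, y i * gens i ≤ k * (gens j * M) := by
      calc ∑ i ∈ Finset.univ.erase j, y i * gens i
          ≤ ∑ _i ∈ Finset.univ.erase j, gens j * M :=
            Finset.sum_le_sum fun i hi =>
              Nat.mul_le_mul (le_of_lt (hsmall i (Finset.ne_of_mem_erase hi))) (hM i)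
        _ = (Finset.univ.erase j).card * (gens j * M) := by rw [Finset.sum_const, smul_eq_mul]
        _ ≤ k * (gens j * M) := by
            refine Nat.mul_le_mul_right _ ?_
            calc (Finset.univ.erase j).card ≤ (Finset.univ : Finset (Fin k)).card :=
                  Finset.card_erase_le
              _ = k := by simp
    have h2 : y j ≤ ∑ i, y i := Finset.single_le_sum (fun i _ => Nat.zero_le _) (Finset.mem_univ j)
    calc n ≤ y j * gens j + k * (gens j * M) := by omega
      _ ≤ (∑ i, y i) * gens j + k * (gens j * M) := by
          exact Nat.add_le_add_right (Nat.mul_le_mul_right _ h2) _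
  · have split : n = y j * gens j + ∑ i ∈ Finset.univ.erase j, y i * gens i := by
      rw [hx, ← hval, ← Finset.add_sum_erase _ _ (Finset.mem_univ j)]
    have h1 : ∑ i ∈ Finset.univ.erase j, y i ≤ k * gens j := by
      calc ∑ i ∈ Finset.univ.erase j, y i
          ≤ ∑ _i ∈ Finset.univ.erase j, gens j :=
            Finset.sum_le_sum fun i hi => le_of_lt (hsmall i (Finset.ne_of_mem_erase hi))
        _ = (Finset.univ.erase j).card * gens j := by rw [Finset.sum_const, smul_eq_mul]
        _ ≤ k * gens j := by
            refine Nat.mul_le_mul_right _ ?_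
            calc (Finset.univ.erase j).card ≤ (Finset.univ : Finset (Fin k)).card :=
                  Finset.card_erase_le
              _ = k := by simp
    have hsplit2 : (∑ i, y i) = y j + ∑ i ∈ Finset.univ.erase j, y i :=
      (Finset.add_sum_erase _ _ (Finset.mem_univ j)).symm
    calc (∑ i, y i) * gens j = y j * gens j + (∑ i ∈ Finset.univ.erase j, y i) * gens j := by
          rw [hsplit2, add_mul]
      _ ≤ n + k * gens j * gens j := by
          have : (∑ i ∈ Finset.univ.erase j, y i) * gens j ≤ k * gens j * gens j :=
            Nat.mul_le_mul_right _ h1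
          omega
      _ = n + k * (gens j * gens j) := by ring_nf

lemma rho_close {k : ℕ} {gens : Fin k → ℕ} (hk : 2 ≤ k) (hg : ∀ i, 0 < gens i)
    (hmono : Monotone gens) {n : ℕ} (hn : n ≠ 0)
    (hmem : ∃ x : Fin k → ℕ, n = ∑ i, x i * gens i) :
    |rhoR k gens n - (gens ⟨k - 1, Nat.sub_lt (lt_of_lt_of_le Nat.zero_lt_two hk) Nat.one_pos⟩ : ℝ) / (gens ⟨0, lt_of_lt_of_le Nat.zero_lt_two hk⟩ : ℝ)|
      ≤ (2 * (k * (gens ⟨k - 1, Nat.sub_lt (lt_of_lt_of_le Nat.zero_lt_two hk) Nat.one_pos⟩ * gens ⟨k - 1, Nat.sub_lt (lt_of_lt_of_le Nat.zero_lt_two hk) Nat.one_pos⟩ : ℕ))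
          * (gens ⟨k - 1, Nat.sub_lt (lt_of_lt_of_le Nat.zero_lt_two hk) Nat.one_pos⟩ : ℝ) / (gens ⟨0, lt_of_lt_of_le Nat.zero_lt_two hk⟩ : ℝ)) / (n : ℝ) := by
  set i0 : Fin k := ⟨0, lt_of_lt_of_le Nat.zero_lt_two hk⟩ with hi0
  set ik : Fin k := ⟨k - 1, Nat.sub_lt (lt_of_lt_of_le Nat.zero_lt_two hk) Nat.one_pos⟩ with hik
  set g0 := gens i0
  set gk := gens ik
  have hle0 : ∀ i, g0 ≤ gens i := fun i => hmono (by simp [hi0, Fin.le_def])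
  have hlek : ∀ i, gens i ≤ gk := fun i => hmono (by simp [hik, Fin.le_def]; omega)
  set C : ℕ := k * (gk * gk) with hC
  obtain ⟨x, hx⟩ := hmem
  have hne : (lenSet k gens n).Nonempty := ⟨∑ i, x i, x, hx, rfl⟩
  have hbdd : BddAbove (lenSet k gens n) := ⟨n, fun l hl => lenSet_le hg hl⟩
  set a := sSup (lenSet k gens n) with ha
  set b := sInf (lenSet k gens n) with hb
  have hamem : a ∈ lenSet k gens n := Nat.sSup_mem hne hbdd
  have hbmem : b ∈ lenSet k gens n := Nat.sInf_mem hne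
  have hbn : n ≤ b * gk := le_mul_of_mem hlek hbmem
  have han : a * g0 ≤ n := mul_le_of_mem hle0 hamem
  obtain ⟨l1, hl1, h1a, -⟩ := key_bounds i0 (hg i0) hlek x hx
  obtain ⟨l2, hl2, -, h2b⟩ := key_bounds ik (hg ik) hlek x hx
  have hnlow : n ≤ a * g0 + C := by
    have hl1a : l1 ≤ a := le_csSup hbdd hl1
    have : k * (g0 * gk) ≤ C := by
      rw [hC]
      exact Nat.mul_le_mul_left _ (Nat.mul_le_mul_right _ (hle0 ik))
    calc n ≤ l1 * g0 + k * (g0 * gk) := h1a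
      _ ≤ a * g0 + C := Nat.add_le_add (Nat.mul_le_mul_right _ hl1a) this
  have hbhigh : b * gk ≤ n + C := by
    have hbl2 : b ≤ l2 := Nat.sInf_le hl2
    calc b * gk ≤ l2 * gk := Nat.mul_le_mul_right _ hbl2
      _ ≤ n + C := h2b
  have hb1 : 1 ≤ b := by
    rcases Nat.eq_zero_or_pos b with h | h
    · rw [h] at hbn; simp at hbn; omega
    · exact h
  -- move to the reals
  have hg0R : (0:ℝ) < g0 := by exact_mod_cast hg i0
  have hgkR : (0:ℝ) < gk := by exact_mod_cast hg ik
  have hbR : (0:ℝ) < b := by exact_mod_cast hb1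
  have hnR : (0:ℝ) < n := by exact_mod_cast Nat.pos_of_ne_zero hn
  have hCR : (0:ℝ) ≤ C := by positivity
  have h1R : (a:ℝ) * g0 ≤ n := by exact_mod_cast han
  have h2R : (n:ℝ) ≤ b * gk := by exact_mod_cast hbn
  have h3R : (n:ℝ) ≤ a * g0 + C := by exact_mod_cast hnlow
  have h4R : (b:ℝ) * gk ≤ n + C := by exact_mod_cast hbhigh
  have hrho : rhoR k gens n = (a:ℝ) / b := rfl
  rw [hrho]
  have hle : (a:ℝ)/b ≤ gk/g0 := by
    rw [div_le_div_iff₀ hbR hg0R]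
    nlinarith
  rw [abs_sub_comm, abs_of_nonneg (by linarith [hle])]
  rw [div_sub_div _ _ hg0R.ne' hbR.ne', div_div, div_le_div_iff₀ (by positivity) (by positivity)]
  push_cast
  have hCR2 : ((k:ℝ) * ((gk:ℝ) * gk)) = (C:ℝ) := by rw [hC]; push_cast; ring
  rw [hCR2]
  have hd : ((gk:ℝ)*b - g0*a : ℝ) ≤ 2*C := by linarith
  nlinarith [mul_le_mul_of_nonneg_right hd (by positivity : (0:ℝ) ≤ (g0:ℝ)*n),
    mul_le_mul_of_nonneg_left h2R (by positivity : (0:ℝ) ≤ 2*(C:ℝ)*g0)]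

lemma rho_exact {k : ℕ} {gens : Fin k → ℕ} (hk : 2 ≤ k) (hg : ∀ i, 0 < gens i)
    (hmono : Monotone gens) (t : ℕ) :
    rhoR k gens (t * (gens ⟨0, lt_of_lt_of_le Nat.zero_lt_two hk⟩ * gens ⟨k - 1, Nat.sub_lt (lt_of_lt_of_le Nat.zero_lt_two hk) Nat.one_pos⟩) + gens ⟨0, lt_of_lt_of_le Nat.zero_lt_two hk⟩)
      = ((t * gens ⟨k - 1, Nat.sub_lt (lt_of_lt_of_le Nat.zero_lt_two hk) Nat.one_pos⟩ + 1 : ℕ) : ℝ) / ((t * gens ⟨0, lt_of_lt_of_le Nat.zero_lt_two hk⟩ + 1 : ℕ) : ℝ) := by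
  set i0 : Fin k := ⟨0, lt_of_lt_of_le Nat.zero_lt_two hk⟩ with hi0
  set ik : Fin k := ⟨k - 1, Nat.sub_lt (lt_of_lt_of_le Nat.zero_lt_two hk) Nat.one_pos⟩ with hik
  set g0 := gens i0
  set gk := gens ik
  have hle0 : ∀ i, g0 ≤ gens i := fun i => hmono (by simp [hi0, Fin.le_def])
  have hlek : ∀ i, gens i ≤ gk := fun i => hmono (by simp [hik, Fin.le_def]; omega)
  have hik0 : ik ≠ i0 := by
    simp only [hik, hi0, ne_eq, Fin.mk.injEq]
    omega
  set n := t * (g0 * gk) + g0 with hn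
  have hsup_mem : (t * gk + 1) ∈ lenSet k gens n := by
    refine ⟨fun i => if i = i0 then t * gk + 1 else 0, ?_, ?_⟩
    · simp only [ite_mul, zero_mul, Finset.sum_ite_eq', Finset.mem_univ, if_true]
      rw [hn]; ring
    · simp only [Finset.sum_ite_eq', Finset.mem_univ, if_true]
  have hinf_mem : (t * g0 + 1) ∈ lenSet k gens n := by
    refine ⟨fun i => t * g0 * (if i = ik then 1 else 0) + (if i = i0 then 1 else 0), ?_, ?_⟩
    · simp only [add_mul, mul_ite, ite_mul, mul_one, mul_zero, one_mul, zero_mul,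
        Finset.sum_add_distrib, Finset.sum_ite_eq', Finset.mem_univ, if_true]
      rw [hn]; ring
    · simp only [Finset.sum_add_distrib, mul_ite, mul_one, mul_zero,
        Finset.sum_ite_eq', Finset.mem_univ, if_true]
  have hub : ∀ l ∈ lenSet k gens n, l ≤ t * gk + 1 := by
    intro l hl
    have h1 : l * g0 ≤ n := mul_le_of_mem hle0 hl
    have h2 : n = (t * gk + 1) * g0 := by rw [hn]; ring
    rw [h2] at h1
    exact Nat.le_of_mul_le_mul_right h1 (hg i0)
  have hsup : sSup (lenSet k gens n) = t * gk + 1 :=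
    le_antisymm (csSup_le ⟨_, hsup_mem⟩ hub) (le_csSup ⟨t * gk + 1, hub⟩ hsup_mem)
  have hlb : ∀ l ∈ lenSet k gens n, t * g0 + 1 ≤ l := by
    intro l hl
    have h1 : n ≤ l * gk := le_mul_of_mem hlek hl
    have h2 : t * g0 * gk < n := by
      rw [hn]
      have := hg i0
      nlinarith
    have h3 : t * g0 * gk < l * gk := lt_of_lt_of_le h2 h1
    have h4 : t * g0 < l := lt_of_mul_lt_mul_right h3 (Nat.zero_le _)
    omega
  have hinf : sInf (lenSet k gens n) = t * g0 + 1 :=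
    le_antisymm (Nat.sInf_le hinf_mem) (le_csInf ⟨_, hinf_mem⟩ hlb)
  rw [rhoR, hsup, hinf]

/-- For a minimally generated numerical semigroup S = ⟨n₁ < ⋯ < n_k⟩ with k ≥ 2,
the set R(S) = {ρ(n) : 0 ≠ n ∈ S} has exactly one limit point in ℝ, namely n_k/n₁. -/
theorem stmt_13 (k : ℕ) (hk : 2 ≤ k) (gens : Fin k → ℕ)
    (hmono : StrictMono gens)
    (hmin : ∀ i, gens i ∉ AddSubmonoid.closure (Set.range gens \ {gens i}))
    (R : Set ℝ)
    (hR : R = {x : ℝ | ∃ n : ℕ, n ≠ 0 ∧ n ∈ AddSubmonoid.closure (Set.range gens) ∧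
      x = rhoR k gens n}) :
    ∀ x : ℝ, AccPt x (Filter.principal R) ↔
      x = (gens ⟨k - 1, by omega⟩ : ℝ) / (gens ⟨0, by omega⟩ : ℝ) := by

  have hg : ∀ i, 0 < gens i := by
    intro i
    rcases Nat.eq_zero_or_pos (gens i) with h | h
    · exfalso
      apply hmin i
      rw [h]
      exact AddSubmonoid.zero_mem _
    · exact h
  set i0 : Fin k := ⟨0, by omega⟩ with hi0
  set ik : Fin k := ⟨k - 1, by omega⟩ with hik
  set g0 := gens i0 with hg0
  set gk := gens ik with hgk
  have hg0k : g0 < gk := hmono (by simp [hi0, hik, Fin.lt_def]; omega)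
  have hg0R : (0:ℝ) < g0 := by exact_mod_cast hg i0
  have hgkR : (0:ℝ) < gk := by exact_mod_cast hg ik
  set v : ℝ := (gk : ℝ) / (g0 : ℝ) with hv
  intro x
  constructor
  · intro hacc
    by_contra hxne
    set ε : ℝ := |x - v| with hε
    have hεpos : 0 < ε := abs_pos.2 (sub_ne_zero.2 hxne)
    set D : ℝ := 2 * ((k : ℝ) * ((gk : ℝ) * gk)) * gk / g0 with hD
    have hD0 : 0 ≤ D := by positivity
    obtain ⟨N, hN⟩ := exists_nat_gt (2 * D / ε + 1)
    have hN1 : (1:ℝ) ≤ N := by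
      have : (0:ℝ) ≤ 2 * D / ε := by positivity
      linarith
    have hNpos : (0:ℝ) < N := by linarith
    have hDN : D / N < ε / 2 := by
      rw [div_lt_div_iff₀ hNpos (by norm_num : (0:ℝ) < 2)]
      have h1 : 2 * D / ε < N := by linarith
      rw [div_lt_iff₀ hεpos] at h1
      linarith
    -- bound on far points
    have hfar : ∀ n : ℕ, n ≠ 0 → (N:ℝ) ≤ n →
        (∃ xx : Fin k → ℕ, n = ∑ i, xx i * gens i) → ε / 2 ≤ |rhoR k gens n - x| := by
      intro n hn0 hnN hmem
      have hclose := rho_close hk hg hmono.monotone hn0 hmem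
      have hc2 : |rhoR k gens n - v| ≤ D / n := by
        have : ((2 * (k * (gens ik * gens ik : ℕ)) : ℝ) * (gens ik : ℝ) / (gens i0 : ℝ)) / n
            = D / n := by
          rw [hD]; push_cast; ring
        calc |rhoR k gens n - v| ≤
            (2 * ((k * (gens ik * gens ik) : ℕ) : ℝ) * (gens ik : ℝ) / (gens i0 : ℝ)) / n := by
              exact_mod_cast hclose
          _ = D / n := by rw [hD]; push_cast; ring
      have hnpos : (0:ℝ) < n := lt_of_lt_of_le hNpos hnN
      have hDn : D / n ≤ D / N := div_le_div_of_nonneg_left hD0 hNpos hnN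
      have h3 : |rhoR k gens n - v| < ε / 2 := lt_of_le_of_lt (le_trans hc2 hDn) hDN
      have h4 : |x - v| ≤ |x - rhoR k gens n| + |rhoR k gens n - v| := abs_sub_le _ _ _
      rw [abs_sub_comm x (rhoR k gens n)] at h4
      rw [← hε] at h4
      linarith
    -- the finite set of small values
    set F : Set ℝ := (rhoR k gens) '' (Set.Iio N) with hF
    have hFfin : (F \ {x}).Finite := ((Set.finite_Iio N).image _).diff
    have hFcl : IsClosed (F \ {x}) := hFfin.isClosed
    have hxG : x ∈ (F \ {x})ᶜ := by simp
    obtain ⟨δ₁, hδ₁, hball₁⟩ := Metric.isOpen_iff.1 hFcl.isOpen_compl x hxG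
    set δ : ℝ := min δ₁ (ε / 2) with hδ
    have hδpos : 0 < δ := lt_min hδ₁ (by linarith)
    obtain ⟨y, ⟨hyball, hyR⟩, hyne⟩ :=
      accPt_iff_nhds.1 hacc (Metric.ball x δ) (Metric.ball_mem_nhds x hδpos)
    rw [hR] at hyR
    obtain ⟨n, hn0, hnS, rfl⟩ := hyR
    have hmem : ∃ xx : Fin k → ℕ, n = ∑ i, xx i * gens i := mem_closure_iff_rep.1 hnS
    rcases lt_or_ge n N with h | h
    · have hyF : rhoR k gens n ∈ F \ {x} := ⟨⟨n, h, rfl⟩, hyne⟩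
      have : rhoR k gens n ∈ (F \ {x})ᶜ :=
        hball₁ (Metric.ball_subset_ball (min_le_left _ _) hyball)
      exact this hyF
    · have h1 : ε / 2 ≤ |rhoR k gens n - x| := hfar n hn0 (by exact_mod_cast h) hmem
      have h2 : dist (rhoR k gens n) x < δ := Metric.mem_ball.1 hyball
      rw [Real.dist_eq] at h2
      have : δ ≤ ε / 2 := min_le_right _ _
      linarith
  · rintro rfl
    rw [accPt_iff_nhds]
    intro U hU
    obtain ⟨δ, hδpos, hballU⟩ := Metric.mem_nhds_iff.1 hU
    obtain ⟨t, ht⟩ := exists_nat_gt ((gk : ℝ) / δ)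
    have htpos : (0:ℝ) < t := lt_trans (by positivity) ht
    set n : ℕ := t * (g0 * gk) + g0 with hn
    have hn0 : n ≠ 0 := by
      have := hg i0
      simp only [hn]
      omega
    have hnS : n ∈ AddSubmonoid.closure (Set.range gens) := by
      rw [mem_closure_iff_rep]
      exact ⟨fun i => if i = i0 then t * gk + 1 else 0, by
        simp only [ite_mul, zero_mul, Finset.sum_ite_eq', Finset.mem_univ, if_true]
        rw [hn]; ring⟩
    have hval : rhoR k gens n = ((t * gk + 1 : ℕ) : ℝ) / ((t * g0 + 1 : ℕ) : ℝ) :=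
      rho_exact hk hg hmono.monotone t
    set A : ℝ := ((t * gk + 1 : ℕ) : ℝ) with hA
    set B : ℝ := ((t * g0 + 1 : ℕ) : ℝ) with hB
    have hAg : A = (t:ℝ) * gk + 1 := by rw [hA]; push_cast; ring
    have hBg : B = (t:ℝ) * g0 + 1 := by rw [hB]; push_cast; ring
    have hBpos : (0:ℝ) < B := by rw [hBg]; positivity
    have hg0k' : (g0:ℝ) < gk := by exact_mod_cast hg0k
    have hg01 : (1:ℝ) ≤ g0 := by exact_mod_cast hg i0
    have hlt : A / B < v := by
      rw [hv, div_lt_div_iff₀ hBpos hg0R, hAg, hBg]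
      nlinarith
    have hdiffeq : v - A / B = ((gk:ℝ) - g0) / ((g0:ℝ) * B) := by
      rw [hv, div_sub_div _ _ hg0R.ne' hBpos.ne']
      congr 1
      rw [hAg, hBg]; ring
    have hdiff : v - A / B < δ := by
      rw [hdiffeq]
      have h1 : (gk:ℝ) < δ * t := by
        rw [div_lt_iff₀ hδpos] at ht
        linarith
      have hden : (t:ℝ) ≤ (g0:ℝ) * B := by
        rw [hBg]
        nlinarith
      rw [div_lt_iff₀ (by positivity)]
      calc (gk:ℝ) - g0 ≤ gk := by linarith [hg0R]
        _ < δ * t := h1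
        _ ≤ δ * ((g0:ℝ) * B) := by
            exact mul_le_mul_of_nonneg_left hden hδpos.le
    refine ⟨rhoR k gens n, ⟨hballU ?_, ?_⟩, ?_⟩
    · rw [Metric.mem_ball, Real.dist_eq, hval]
      rw [abs_of_nonpos (by linarith)]
      linarith
    · rw [hR]
      exact ⟨n, hn0, hnS, rfl⟩
    · rw [hval]
      exact ne_of_lt hlt
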